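/- Let λ be a partition of 2n all of whose odd parts occur with even multiplicity (i.e., m_λ(i) is even whenever i is odd), together with a function ε on part sizes as in Spaltenstein's parametrization of unipotent classes of Sp(2n) in characteristic 2. Suppose (μ,φ) is another such pair with (λ,ε) ≤ (μ,φ) in Spaltenstein's order. If λ*_{k+1} = m, ε(λ_{m+1}) = 1 (where λ_{m+1} = k), and ∑_{j=1}^k λ*_j = ∑_{j=1}^k μ*_j, then ∑_{j=1}^m λ_j = ∑_{j=1}^m μ_j and μ_{m+1} = k. -/

import Mathlib

open Finset

/-- Partial sum `∑_{j=1}^i f j` (one-indexed). -/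
def psum (f : ℕ → ℕ) (i : ℕ) : ℕ := ∑ j ∈ Finset.Icc 1 i, f j

/-- Conjugate partition: `conj f j = #{k ≥ 1 : f k ≥ j}`. -/
noncomputable def conj (f : ℕ → ℕ) (j : ℕ) : ℕ := Set.ncard {k : ℕ | 1 ≤ k ∧ j ≤ f k}

/-- `f` is a partition of `n` (one-indexed, weakly decreasing, eventually zero). -/
def IsPartitionOf (f : ℕ → ℕ) (n : ℕ) : Prop :=
  (∀ i, 1 ≤ i → f (i + 1) ≤ f i) ∧ ∃ N, (∀ i, N < i → f i = 0) ∧ psum f N = n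

/-- Weakly decreasing (from index 1 on). -/
def Decr (f : ℕ → ℕ) : Prop := ∀ i, 1 ≤ i → f (i + 1) ≤ f i

/-- `A_i = ∑_{j ≤ i} (α_j + β_j)`. -/
def AA (f g : ℕ → ℕ) (i : ℕ) : ℕ := ∑ j ∈ Finset.Icc 1 i, (f j + g j)

/-- `B_i = ∑_{j < i} (α_j + β_j) + α_i`. -/
def BB (f g : ℕ → ℕ) (i : ℕ) : ℕ := (∑ j ∈ Finset.Icc 1 (i - 1), (f j + g j)) + f i

/-- Multiplicity of `i` as a part. -/
noncomputable def mult (f : ℕ → ℕ) (i : ℕ) : ℕ := conj f i - conj f (i + 1)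

lemma decr_le {f : ℕ → ℕ} (hf : ∀ i, 1 ≤ i → f (i+1) ≤ f i) {i j : ℕ}
    (h1 : 1 ≤ i) (hij : i ≤ j) : f j ≤ f i := by
  induction j with
  | zero => omega
  | succ j ih =>
    rcases Nat.lt_or_ge i (j+1) with h | h
    · exact le_trans (hf j (by omega)) (ih (by omega))
    · have : i = j + 1 := by omega
      simp [this]

lemma conj_eq_card {f : ℕ → ℕ} {N : ℕ} (hN : ∀ i, N < i → f i = 0) {j : ℕ} (hj : 1 ≤ j) :
    conj f j = ((Finset.Icc 1 N).filter (fun k => j ≤ f k)).card := by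
  rw [conj]
  have h : {k : ℕ | 1 ≤ k ∧ j ≤ f k} = ↑((Finset.Icc 1 N).filter (fun k => j ≤ f k)) := by
    ext a
    simp only [Set.mem_setOf_eq, Finset.coe_filter, Finset.mem_Icc, Set.mem_setOf_eq]
    constructor
    · rintro ⟨h1, h2⟩
      refine ⟨⟨h1, ?_⟩, h2⟩
      by_contra hc
      have := hN a (by omega)
      omega
    · tauto
  rw [h, Set.ncard_coe_finset]

lemma psum_succ (f : ℕ → ℕ) (i : ℕ) : psum f (i+1) = psum f i + f (i+1) := by
  rw [psum, psum, Finset.sum_Icc_succ_top (by omega)]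

lemma psum_conj {f : ℕ → ℕ} {N : ℕ} (hN : ∀ i, N < i → f i = 0) (K : ℕ) :
    psum (conj f) K = ∑ j ∈ Finset.Icc 1 N, min (f j) K := by
  rw [psum]
  have h1 : ∀ i ∈ Finset.Icc 1 K, conj f i = ∑ j ∈ Finset.Icc 1 N, if i ≤ f j then 1 else 0 := by
    intro i hi
    rw [conj_eq_card hN (Finset.mem_Icc.mp hi).1, Finset.card_filter]
  rw [Finset.sum_congr rfl h1, Finset.sum_comm]
  refine Finset.sum_congr rfl fun j _ => ?_
  rw [← Finset.card_filter]
  have h2 : (Finset.Icc 1 K).filter (fun i => i ≤ f j) = Finset.Icc 1 (min (f j) K) := by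
    ext a
    simp only [Finset.mem_filter, Finset.mem_Icc]
    omega
  rw [h2, Nat.card_Icc]
  omega

lemma le_conj_iff {f : ℕ → ℕ} {N : ℕ} (hf : ∀ i, 1 ≤ i → f (i+1) ≤ f i)
    (hN : ∀ i, N < i → f i = 0) {k t : ℕ} (hk : 1 ≤ k) (ht : 1 ≤ t) :
    t ≤ conj f k ↔ k ≤ f t := by
  rw [conj_eq_card hN hk]
  constructor
  · intro h
    by_contra hc
    push_neg at hc
    have hsub : (Finset.Icc 1 N).filter (fun j => k ≤ f j) ⊆ Finset.Icc 1 (t-1) := by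
      intro a ha
      simp only [Finset.mem_filter, Finset.mem_Icc] at ha ⊢
      refine ⟨ha.1.1, ?_⟩
      by_contra h2
      have hta : t ≤ a := by omega
      have := decr_le hf ht hta
      omega
    have := Finset.card_le_card hsub
    rw [Nat.card_Icc] at this
    omega
  · intro h
    have hsub : Finset.Icc 1 t ⊆ (Finset.Icc 1 N).filter (fun j => k ≤ f j) := by
      intro a ha
      simp only [Finset.mem_filter, Finset.mem_Icc] at ha ⊢
      have haf : k ≤ f a := le_trans h (decr_le hf ha.1 ha.2)
      refine ⟨⟨ha.1, ?_⟩, haf⟩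
      by_contra hc
      have := hN a (by omega)
      omega
    have := Finset.card_le_card hsub
    rw [Nat.card_Icc] at this
    omega


lemma psum_conj_add {f : ℕ → ℕ} {N m k S : ℕ} (hf : ∀ i, 1 ≤ i → f (i+1) ≤ f i)
    (hN : ∀ i, N < i → f i = 0) (hS : psum f N = S)
    (hm : f (m+1) = k) (hk : 1 ≤ k) :
    psum (conj f) k + psum f m = m * k + S := by
  have hmN : m + 1 ≤ N := by
    by_contra hc
    have := hN (m+1) (by omega)
    omega
  have hsplit : ∀ g : ℕ → ℕ, ∑ j ∈ Finset.Icc 1 N, g j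
      = ∑ j ∈ Finset.Icc 1 m, g j + ∑ j ∈ Finset.Icc (m+1) N, g j := by
    intro g
    rw [← Finset.Ico_add_one_right_eq_Icc 1 N, ← Finset.Ico_add_one_right_eq_Icc 1 m, ← Finset.Ico_add_one_right_eq_Icc (m+1) N]
    exact (Finset.sum_Ico_consecutive g (by omega) (by omega)).symm
  rw [psum_conj hN k, hsplit]
  have h1 : ∑ j ∈ Finset.Icc 1 m, min (f j) k = m * k := by
    have hc : ∀ j ∈ Finset.Icc 1 m, min (f j) k = k := by
      intro j hj
      simp only [Finset.mem_Icc] at hj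
      have := decr_le hf hj.1 (show j ≤ m+1 by omega)
      omega
    rw [Finset.sum_congr rfl hc, Finset.sum_const, smul_eq_mul, Nat.card_Icc,
      Nat.add_sub_cancel]
  have h2 : ∑ j ∈ Finset.Icc (m+1) N, min (f j) k = ∑ j ∈ Finset.Icc (m+1) N, f j := by
    refine Finset.sum_congr rfl fun j hj => ?_
    simp only [Finset.mem_Icc] at hj
    have := decr_le hf (show 1 ≤ m+1 by omega) hj.1
    omega
  have h3 := hsplit f
  rw [psum] at hS
  rw [psum]
  omega

/-- a step in the comparison of Spaltenstein's order with the
order on pairs, for `Sp(2n)` in characteristic 2. Here `ε, φ` take values in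
`{-1, 0, 1}` where `-1` stands for `ω` (so `ω < 0 < 1` is the numeric order). -/
theorem stmt19 (n : ℕ) (la mu : ℕ → ℕ) (ε φ : ℕ → ℤ)
    (hla : IsPartitionOf la (2 * n)) (hmu : IsPartitionOf mu (2 * n))
    (hlaodd : ∀ i, 1 ≤ i → Odd i → Even (mult la i))
    (hmuodd : ∀ i, 1 ≤ i → Odd i → Even (mult mu i))
    -- ε is an admissible function for λ (Spaltenstein's conditions, Sp case)
    (hεr : ∀ i, ε i = -1 ∨ ε i = 0 ∨ ε i = 1) (hε0 : ε 0 = 1)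
    (hεa : ∀ i, 1 ≤ i → (Odd i ∨ mult la i = 0) → ε i = -1)
    (hεb : ∀ i, 1 ≤ i → Even i → Odd (mult la i) → ε i = 1)
    (hεc : ∀ i, 1 ≤ i → Even i → 0 < mult la i → ε i ≠ -1)
    -- φ is an admissible function for μ
    (hφr : ∀ i, φ i = -1 ∨ φ i = 0 ∨ φ i = 1) (hφ0 : φ 0 = 1)
    (hφa : ∀ i, 1 ≤ i → (Odd i ∨ mult mu i = 0) → φ i = -1)
    (hφb : ∀ i, 1 ≤ i → Even i → Odd (mult mu i) → φ i = 1)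
    (hφc : ∀ i, 1 ≤ i → Even i → 0 < mult mu i → φ i ≠ -1)
    -- Spaltenstein's order (λ,ε) ≤ (μ,φ)
    (hord1 : ∀ i, 1 ≤ i → psum la i ≤ psum mu i)
    (hord2 : ∀ i, 1 ≤ i →
      (psum (conj mu) i : ℤ) - max (φ i) 0 ≤ (psum (conj la) i : ℤ) - max (ε i) 0)
    (hord3 : ∀ i, 1 ≤ i → psum (conj la) i = psum (conj mu) i →
      Odd ((conj la (i + 1) : ℤ) - (conj mu (i + 1) : ℤ)) → φ i ≠ 0)
    -- the hypotheses of the claim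
    (k m : ℕ) (hk : 1 ≤ k)
    (hm : conj la (k + 1) = m) (hlam : la (m + 1) = k) (hε : ε k = 1)
    (heq : psum (conj la) k = psum (conj mu) k) :
    psum la m = psum mu m ∧ mu (m + 1) = k := by
  obtain ⟨hlad, Nl, hNl, hSl⟩ := hla
  obtain ⟨hmud, Nm, hNm, hSm⟩ := hmu
  -- k is even and at least 2
  have hkeven : Even k := by
    by_contra hodd
    have := hεa k hk (Or.inl (Nat.not_even_iff_odd.mp hodd))
    omega
  have hk2 : 2 ≤ k := by
    rcases Nat.even_iff.mp hkeven with h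
    omega
  have hoddk1 : Odd (k + 1) := by
    rw [Nat.odd_iff]; rw [Nat.even_iff] at hkeven; omega
  have hoddkm1 : Odd (k - 1) := by
    rw [Nat.odd_iff]; rw [Nat.even_iff] at hkeven; omega
  -- ε, φ at odd indices
  have hφk1 : φ (k + 1) = -1 := hφa (k + 1) (by omega) (Or.inl hoddk1)
  have hεk1 : ε (k + 1) = -1 := hεa (k + 1) (by omega) (Or.inl hoddk1)
  have hφkm1 : φ (k - 1) = -1 := hφa (k - 1) (by omega) (Or.inl hoddkm1)
  have hεkm1 : ε (k - 1) = -1 := hεa (k - 1) (by omega) (Or.inl hoddkm1)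
  -- T_{k+1} ≤ S_{k+1}
  have h2a := hord2 (k + 1) (by omega)
  rw [hφk1, hεk1] at h2a
  norm_num at h2a
  have h2a' : psum (conj mu) (k + 1) ≤ psum (conj la) (k + 1) := by exact_mod_cast h2a
  -- T_{k-1} ≤ S_{k-1}
  have h2b := hord2 (k - 1) (by omega)
  rw [hφkm1, hεkm1] at h2b
  norm_num at h2b
  have h2b' : psum (conj mu) (k - 1) ≤ psum (conj la) (k - 1) := by exact_mod_cast h2b
  -- partial sum expansions at k-1 → k → k+1
  have hkk : k = (k - 1) + 1 := by omega
  have eSk : psum (conj la) k = psum (conj la) (k - 1) + conj la k := by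
    rw [hkk]; rw [psum_succ]; rw [← hkk]
  have eTk : psum (conj mu) k = psum (conj mu) (k - 1) + conj mu k := by
    rw [hkk]; rw [psum_succ]; rw [← hkk]
  have eSk1 : psum (conj la) (k + 1) = psum (conj la) k + conj la (k + 1) := psum_succ _ k
  have eTk1 : psum (conj mu) (k + 1) = psum (conj mu) k + conj mu (k + 1) := psum_succ _ k
  -- conj la k ≥ m + 1
  have hclak : m + 1 ≤ conj la k :=
    (le_conj_iff hlad hNl hk (by omega)).mpr (by omega)
  -- conj mu k ≥ m + 1, conj mu (k+1) ≤ m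
  have hcmuk : m + 1 ≤ conj mu k := by omega
  have hcmuk1 : conj mu (k + 1) ≤ m := by omega
  -- mu (m+1) = k
  have hmuk : mu (m + 1) = k := by
    have hge : k ≤ mu (m + 1) :=
      (le_conj_iff hmud hNm hk (by omega)).mp hcmuk
    have hle : mu (m + 1) ≤ k := by
      by_contra hc
      have := (le_conj_iff hmud hNm (show 1 ≤ k + 1 by omega) (show 1 ≤ m + 1 by omega)).mpr
        (by omega)
      omega
    omega
  -- the sum identities
  have hA := psum_conj_add hlad hNl hSl hlam hk
  have hB := psum_conj_add hmud hNm hSm hmuk hk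
  exact ⟨by omega, hmuk⟩
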